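/- Let n ≥ 1 and let g be a positive definite symmetric n×n matrix with inverse g⁻¹, p ∈ R^n, and real numbers c1, c2, c3, d1, d2, d3. Set t = (1/2)·pᵀg⁻¹p, and suppose c1+2t·d1 > 0, c2+2t·d2 > 0, and (c1+2t·d1)(c2+2t·d2) − (c3+2t·d3)² > 0, and also c1 > 0, c2 > 0, c1·c2 − c3² > 0. Then the 2n×2n symmetric matrix G with blocks G11 = c1·g + d1·p·pᵀ, G22 = c2·g⁻¹ + d2·(g⁻¹p)(g⁻¹p)ᵀ, G12 = G21ᵀ = c3·I + d3·p·(g⁻¹p)ᵀ is positive definite. -/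

import Mathlib

open scoped Matrix
open Matrix

private lemma aux_vmv {n : ℕ} (a b y : Fin n → ℝ) :
    Matrix.vecMulVec a b *ᵥ y = (b ⬝ᵥ y) • a := by
  ext i
  simp only [Matrix.mulVec, Matrix.vecMulVec, dotProduct, Pi.smul_apply, smul_eq_mul,
    Matrix.of_apply, Finset.sum_mul]
  exact Finset.sum_congr rfl (fun j _ => by ring)

private lemma aux_vmv_t {n : ℕ} (a b : Fin n → ℝ) :
    (Matrix.vecMulVec a b)ᵀ = Matrix.vecMulVec b a := by
  ext i j
  simp [Matrix.vecMulVec_apply, Matrix.transpose_apply, mul_comm]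

private lemma aux_symm_dot {n : ℕ} {M : Matrix (Fin n) (Fin n) ℝ} (hM : M.IsSymm)
    (x y : Fin n → ℝ) : x ⬝ᵥ M *ᵥ y = y ⬝ᵥ M *ᵥ x := by
  rw [Matrix.dotProduct_mulVec, ← Matrix.mulVec_transpose, hM.eq, dotProduct_comm]

private lemma aux_pos (c1 c2 c3 u v s : ℝ) (hc1 : 0 < c1) (hd : 0 < c1 * c2 - c3 ^ 2)
    (hu : 0 ≤ u) (hv : 0 ≤ v) (hs : s ^ 2 ≤ u * v) (hp : 0 < u ∨ 0 < v) :
    0 < c1 * u + c2 * v + 2 * c3 * s := by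
  have hc2 : 0 < c2 := by nlinarith [sq_nonneg c3]
  rcases eq_or_lt_of_le hu with hu0 | hu0
  · subst hu0
    have hs0 : s = 0 := by nlinarith [sq_nonneg s]
    have hv' : 0 < v := by
      rcases hp with h | h
      · exact absurd h (by linarith)
      · exact h
    subst hs0
    nlinarith
  rcases eq_or_lt_of_le hv with hv0 | hv0
  · subst hv0
    have hs0 : s = 0 := by nlinarith [sq_nonneg s]
    subst hs0
    nlinarith [mul_pos hc1 hu0]
  by_contra hQ
  push_neg at hQ
  have hL : 0 < c1 * u + c2 * v := by nlinarith
  have hh1 : (c1 * u + c2 * v) ^ 2 ≤ (2 * c3 * s) ^ 2 := by nlinarith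
  have hh2 : (2 * c3 * s) ^ 2 ≤ 4 * c3 ^ 2 * (u * v) := by
    nlinarith [mul_le_mul_of_nonneg_left hs (sq_nonneg c3)]
  have hh3 : 4 * (c1 * c2) * (u * v) ≤ (c1 * u + c2 * v) ^ 2 + 4 * (c1 * c2) * (u * v) -
      4 * (c1 * c2) * (u * v) := by nlinarith [sq_nonneg (c1 * u - c2 * v)]
  nlinarith [mul_pos hd (mul_pos hu0 hv0), sq_nonneg (c1 * u - c2 * v)]

private lemma aux_nonneg (c1 c2 c3 u v s : ℝ) (hc1 : 0 < c1) (hd : 0 < c1 * c2 - c3 ^ 2)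
    (hu : 0 ≤ u) (hv : 0 ≤ v) (hs : s ^ 2 ≤ u * v) :
    0 ≤ c1 * u + c2 * v + 2 * c3 * s := by
  have hc2 : 0 < c2 := by nlinarith [sq_nonneg c3]
  rcases eq_or_lt_of_le hu with hu0 | hu0
  · subst hu0
    have hs0 : s = 0 := by nlinarith [sq_nonneg s]
    subst hs0
    nlinarith [mul_nonneg hc2.le hv]
  · exact (aux_pos c1 c2 c3 u v s hc1 hd hu hv hs (Or.inl hu0)).le

theorem stmt_18 (n : ℕ) (hn : 1 ≤ n) (g : Matrix (Fin n) (Fin n) ℝ)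
    (hg : g.PosDef) (hsym : g.IsSymm) (p : Fin n → ℝ)
    (c1 c2 c3 d1 d2 d3 : ℝ)
    (t : ℝ) (ht : t = (1 / 2) * (p ⬝ᵥ g⁻¹.mulVec p))
    (h1 : 0 < c1 + 2 * t * d1) (h2 : 0 < c2 + 2 * t * d2)
    (h3 : 0 < (c1 + 2 * t * d1) * (c2 + 2 * t * d2) - (c3 + 2 * t * d3) ^ 2)
    (hc1 : 0 < c1) (hc2 : 0 < c2) (hc3 : 0 < c1 * c2 - c3 ^ 2) :
    (Matrix.fromBlocks
      (c1 • g + d1 • Matrix.vecMulVec p p)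
      (c3 • (1 : Matrix (Fin n) (Fin n) ℝ) + d3 • Matrix.vecMulVec p (g⁻¹.mulVec p))
      (c3 • (1 : Matrix (Fin n) (Fin n) ℝ) + d3 • Matrix.vecMulVec p (g⁻¹.mulVec p))ᵀ
      (c2 • g⁻¹ + d2 • Matrix.vecMulVec (g⁻¹.mulVec p) (g⁻¹.mulVec p))).PosDef := by
  have hdet : IsUnit g.det := isUnit_iff_ne_zero.mpr hg.det_pos.ne'
  have hGinv : g * g⁻¹ = 1 := Matrix.mul_nonsing_inv g hdet
  have hsymInv : g⁻¹.IsSymm := by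
    rw [Matrix.IsSymm, Matrix.transpose_nonsing_inv, hsym.eq]
  have hginv : g⁻¹.PosDef := hg.inv
  set q : Fin n → ℝ := g⁻¹ *ᵥ p with hqdef
  have hgq : g *ᵥ q = p := by
    rw [hqdef, Matrix.mulVec_mulVec, hGinv, Matrix.one_mulVec]
  have hpq : p ⬝ᵥ q = 2 * t := by
    rw [ht]; ring
  have hqp : q ⬝ᵥ p = 2 * t := by rw [dotProduct_comm]; exact hpq
  have htn : 0 ≤ t := by
    rw [ht]
    have := hginv.posSemidef.dotProduct_mulVec_nonneg p
    simp only [star_trivial] at this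
    linarith
  -- Cauchy-Schwarz for the pair of quadratic forms g, g⁻¹
  have hcs : ∀ x y : Fin n → ℝ, (x ⬝ᵥ y) ^ 2 ≤ (x ⬝ᵥ g *ᵥ x) * (y ⬝ᵥ g⁻¹ *ᵥ y) := by
    intro x y
    set w : Fin n → ℝ := g⁻¹ *ᵥ y with hwdef
    have hgw : g *ᵥ w = y := by
      rw [hwdef, Matrix.mulVec_mulVec, hGinv, Matrix.one_mulVec]
    have hkey : ∀ l : ℝ, 0 ≤ (y ⬝ᵥ g⁻¹ *ᵥ y) * (l * l) + (2 * (x ⬝ᵥ y)) * l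
        + (x ⬝ᵥ g *ᵥ x) := by
      intro l
      have h0 := hg.posSemidef.dotProduct_mulVec_nonneg (x + l • w)
      simp only [star_trivial] at h0
      have e1 : w ⬝ᵥ g *ᵥ x = x ⬝ᵥ y := by rw [aux_symm_dot hsym w x, hgw]
      have e2 : w ⬝ᵥ y = y ⬝ᵥ g⁻¹ *ᵥ y := by rw [dotProduct_comm, hwdef]
      have hexp : (x + l • w) ⬝ᵥ g *ᵥ (x + l • w)
          = (y ⬝ᵥ g⁻¹ *ᵥ y) * (l * l) + (2 * (x ⬝ᵥ y)) * l + (x ⬝ᵥ g *ᵥ x) := by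
        rw [Matrix.mulVec_add, Matrix.mulVec_smul, hgw]
        simp only [dotProduct_add, add_dotProduct, smul_dotProduct,
          dotProduct_smul, smul_eq_mul]
        rw [e1, e2]
        ring
      rw [hexp] at h0
      exact h0
    have hd := discrim_le_zero hkey
    rw [discrim] at hd
    nlinarith
  refine Matrix.PosDef.of_dotProduct_mulVec_pos ?_ ?_
  · rw [Matrix.isHermitian_fromBlocks_iff]
    refine ⟨?_, ?_, ?_, ?_⟩
    · rw [Matrix.IsHermitian, Matrix.conjTranspose_eq_transpose_of_trivial,
        Matrix.transpose_add, Matrix.transpose_smul, Matrix.transpose_smul, hsym.eq, aux_vmv_t]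
    · rw [Matrix.conjTranspose_eq_transpose_of_trivial]
    · rw [Matrix.conjTranspose_eq_transpose_of_trivial, Matrix.transpose_transpose]
    · rw [Matrix.IsHermitian, Matrix.conjTranspose_eq_transpose_of_trivial,
        Matrix.transpose_add, Matrix.transpose_smul, Matrix.transpose_smul, hsymInv.eq, aux_vmv_t]
  · intro z hz
    set x : Fin n → ℝ := z ∘ Sum.inl with hxdef
    set y : Fin n → ℝ := z ∘ Sum.inr with hydef
    have hzxy : z = Sum.elim x y := by
      ext (i | i) <;> rfl
    have hQ : star z ⬝ᵥ (Matrix.fromBlocks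
      (c1 • g + d1 • Matrix.vecMulVec p p)
      (c3 • (1 : Matrix (Fin n) (Fin n) ℝ) + d3 • Matrix.vecMulVec p q)
      (c3 • (1 : Matrix (Fin n) (Fin n) ℝ) + d3 • Matrix.vecMulVec p q)ᵀ
      (c2 • g⁻¹ + d2 • Matrix.vecMulVec q q)) *ᵥ z
        = c1 * (x ⬝ᵥ g *ᵥ x) + c2 * (y ⬝ᵥ g⁻¹ *ᵥ y) + 2 * c3 * (x ⬝ᵥ y)
          + d1 * (p ⬝ᵥ x) ^ 2 + d2 * (q ⬝ᵥ y) ^ 2 + 2 * d3 * ((p ⬝ᵥ x) * (q ⬝ᵥ y)) := by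
      rw [star_trivial, hzxy, Matrix.fromBlocks_mulVec]
      rw [show (Sum.elim x y : Fin n ⊕ Fin n → ℝ) ∘ Sum.inl = x from rfl,
          show (Sum.elim x y : Fin n ⊕ Fin n → ℝ) ∘ Sum.inr = y from rfl]
      rw [sumElim_dotProduct_sumElim]
      rw [Matrix.transpose_add, Matrix.transpose_smul, Matrix.transpose_smul,
        Matrix.transpose_one, aux_vmv_t]
      simp only [Matrix.add_mulVec, Matrix.smul_mulVec, aux_vmv, Matrix.one_mulVec,
        dotProduct_add, dotProduct_smul, smul_eq_mul]
      have e1 : x ⬝ᵥ p = p ⬝ᵥ x := dotProduct_comm x p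
      have e2 : y ⬝ᵥ q = q ⬝ᵥ y := dotProduct_comm y q
      have e3 : y ⬝ᵥ x = x ⬝ᵥ y := dotProduct_comm y x
      have e4 : x ⬝ᵥ q = q ⬝ᵥ x := dotProduct_comm x q
      have e5 : y ⬝ᵥ p = p ⬝ᵥ y := dotProduct_comm y p
      rw [e1, e2, e3]
      ring
    rw [hQ]
    set u : ℝ := x ⬝ᵥ g *ᵥ x with hudef
    set v : ℝ := y ⬝ᵥ g⁻¹ *ᵥ y with hvdef
    set s : ℝ := x ⬝ᵥ y with hsdef
    set a : ℝ := p ⬝ᵥ x with hadef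
    set b : ℝ := q ⬝ᵥ y with hbdef
    have hxy : x ≠ 0 ∨ y ≠ 0 := by
      by_contra h
      push_neg at h
      apply hz
      rw [hzxy, h.1, h.2]
      ext (i | i) <;> simp
    have hu0 : 0 ≤ u := by
      have := hg.posSemidef.dotProduct_mulVec_nonneg x; simpa using this
    have hv0 : 0 ≤ v := by
      have := hginv.posSemidef.dotProduct_mulVec_nonneg y; simpa using this
    rcases eq_or_lt_of_le htn with ht0 | ht0
    · -- t = 0, hence p = 0
      have hp0 : p = 0 := by
        by_contra hp
        have h' := hginv.dotProduct_mulVec_pos hp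
        simp only [star_trivial] at h'
        rw [ht] at ht0
        linarith
      have ha0 : a = 0 := by rw [hadef, hp0, zero_dotProduct]
      have hq0 : q = 0 := by rw [hqdef, hp0, Matrix.mulVec_zero]
      have hb0 : b = 0 := by rw [hbdef, hq0, zero_dotProduct]
      have hpos : 0 < u ∨ 0 < v := by
        rcases hxy with h | h
        · left; have := hg.dotProduct_mulVec_pos h; simpa using this
        · right; have := hginv.dotProduct_mulVec_pos h; simpa using this
      have := aux_pos c1 c2 c3 u v s hc1 hc3 hu0 hv0 (hcs x y) hpos
      rw [ha0, hb0]
      nlinarith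
    · -- t > 0
      set α : ℝ := a / (2 * t) with hαdef
      set β : ℝ := b / (2 * t) with hβdef
      have ht2 : (2 * t) ≠ 0 := by positivity
      have ha : a = 2 * t * α := by rw [hαdef]; field_simp
      have hb : b = 2 * t * β := by rw [hβdef]; field_simp
      set x' : Fin n → ℝ := x - α • q with hx'def
      set y' : Fin n → ℝ := y - β • p with hy'def
      have hpx' : p ⬝ᵥ x' = 0 := by
        rw [hx'def, dotProduct_sub, dotProduct_smul, hpq, smul_eq_mul, ← hadef, ha]
        ring
      have hqy' : q ⬝ᵥ y' = 0 := by
        rw [hy'def, dotProduct_sub, dotProduct_smul, hqp, smul_eq_mul, ← hbdef, hb]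
        ring
      have e_qgx : q ⬝ᵥ g *ᵥ x = a := by
        rw [aux_symm_dot hsym q x, hgq, dotProduct_comm, hadef]
      have e_pginvy : p ⬝ᵥ g⁻¹ *ᵥ y = b := by
        rw [aux_symm_dot hsymInv p y, ← hqdef, dotProduct_comm, hbdef]
      have hgx' : g *ᵥ x' = g *ᵥ x - α • p := by
        rw [hx'def, Matrix.mulVec_sub, Matrix.mulVec_smul, hgq]
      have hginvy' : g⁻¹ *ᵥ y' = g⁻¹ *ᵥ y - β • q := by
        rw [hy'def, Matrix.mulVec_sub, Matrix.mulVec_smul, ← hqdef]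
      have hu_eq : x' ⬝ᵥ g *ᵥ x' = u - 2 * t * α ^ 2 := by
        rw [hgx', hx'def]
        simp only [sub_dotProduct, dotProduct_sub, smul_dotProduct,
          dotProduct_smul, smul_eq_mul]
        rw [e_qgx, hqp, dotProduct_comm x p, ← hadef, ← hudef, ha]
        ring
      have hv_eq : y' ⬝ᵥ g⁻¹ *ᵥ y' = v - 2 * t * β ^ 2 := by
        rw [hginvy', hy'def]
        simp only [sub_dotProduct, dotProduct_sub, smul_dotProduct,
          dotProduct_smul, smul_eq_mul]
        rw [e_pginvy, hpq, dotProduct_comm y q, ← hbdef, ← hvdef, hb]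
        ring
      have hs_eq : x' ⬝ᵥ y' = s - 2 * t * (α * β) := by
        rw [hx'def, hy'def]
        simp only [sub_dotProduct, dotProduct_sub, smul_dotProduct,
          dotProduct_smul, smul_eq_mul]
        rw [← hbdef, dotProduct_comm x p, ← hadef, hqp, ← hsdef, ha, hb]
        ring
      have hu'0 : 0 ≤ x' ⬝ᵥ g *ᵥ x' := by
        have := hg.posSemidef.dotProduct_mulVec_nonneg x'; simpa using this
      have hv'0 : 0 ≤ y' ⬝ᵥ g⁻¹ *ᵥ y' := by
        have := hginv.posSemidef.dotProduct_mulVec_nonneg y'; simpa using this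
      have hA : 0 ≤ c1 * (x' ⬝ᵥ g *ᵥ x') + c2 * (y' ⬝ᵥ g⁻¹ *ᵥ y') + 2 * c3 * (x' ⬝ᵥ y') :=
        aux_nonneg c1 c2 c3 _ _ _ hc1 hc3 hu'0 hv'0 (hcs x' y')
      have hB : 0 ≤ (c1 + 2 * t * d1) * α ^ 2 + (c2 + 2 * t * d2) * β ^ 2
          + 2 * (c3 + 2 * t * d3) * (α * β) :=
        aux_nonneg _ _ _ _ _ _ h1 h3 (sq_nonneg α) (sq_nonneg β) (le_of_eq (mul_pow α β 2))
      have hfinal : c1 * u + c2 * v + 2 * c3 * s + d1 * a ^ 2 + d2 * b ^ 2 + 2 * d3 * (a * b)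
          = (c1 * (x' ⬝ᵥ g *ᵥ x') + c2 * (y' ⬝ᵥ g⁻¹ *ᵥ y') + 2 * c3 * (x' ⬝ᵥ y'))
            + 2 * t * ((c1 + 2 * t * d1) * α ^ 2 + (c2 + 2 * t * d2) * β ^ 2
              + 2 * (c3 + 2 * t * d3) * (α * β)) := by
        rw [hu_eq, hv_eq, hs_eq, ha, hb]
        ring
      rw [hfinal]
      have h2t : (0:ℝ) < 2 * t := by linarith
      have hApos' : ∀ w : Fin n → ℝ, w ≠ 0 →
          0 < c1 * (x' ⬝ᵥ g *ᵥ x') + c2 * (y' ⬝ᵥ g⁻¹ *ᵥ y') + 2 * c3 * (x' ⬝ᵥ y') →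
          True := fun _ _ _ => trivial
      rcases eq_or_ne x' 0 with hx'0 | hx'0
      · rcases eq_or_ne y' 0 with hy'0 | hy'0
        · -- both perpendicular parts vanish, so α ≠ 0 or β ≠ 0
          have hab : α ≠ 0 ∨ β ≠ 0 := by
            by_contra hcon
            push_neg at hcon
            apply hz
            have hx0 : x = 0 := by
              have hxx : x = x' + α • q := by rw [hx'def]; abel
              rw [hxx, hx'0, hcon.1]; simp
            have hy0 : y = 0 := by
              have hyy : y = y' + β • p := by rw [hy'def]; abel
              rw [hyy, hy'0, hcon.2]; simp
            rw [hzxy, hx0, hy0]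
            ext (i | i) <;> simp
          have hBpos : 0 < (c1 + 2 * t * d1) * α ^ 2 + (c2 + 2 * t * d2) * β ^ 2
              + 2 * (c3 + 2 * t * d3) * (α * β) := by
            refine aux_pos _ _ _ _ _ _ h1 h3 (sq_nonneg α) (sq_nonneg β)
              (le_of_eq (mul_pow α β 2)) ?_
            rcases hab with h | h
            · exact Or.inl (lt_of_le_of_ne (sq_nonneg α) (Ne.symm (pow_ne_zero 2 h)))
            · exact Or.inr (lt_of_le_of_ne (sq_nonneg β) (Ne.symm (pow_ne_zero 2 h)))
          have := mul_pos h2t hBpos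
          linarith
        · have hApos : 0 < c1 * (x' ⬝ᵥ g *ᵥ x') + c2 * (y' ⬝ᵥ g⁻¹ *ᵥ y') + 2 * c3 * (x' ⬝ᵥ y') := by
            refine aux_pos c1 c2 c3 _ _ _ hc1 hc3 hu'0 hv'0 (hcs x' y') (Or.inr ?_)
            have := hginv.dotProduct_mulVec_pos hy'0
            simpa using this
          have := mul_nonneg h2t.le hB
          linarith
      · have hApos : 0 < c1 * (x' ⬝ᵥ g *ᵥ x') + c2 * (y' ⬝ᵥ g⁻¹ *ᵥ y') + 2 * c3 * (x' ⬝ᵥ y') := by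
          refine aux_pos c1 c2 c3 _ _ _ hc1 hc3 hu'0 hv'0 (hcs x' y') (Or.inl ?_)
          have := hg.dotProduct_mulVec_pos hx'0
          simpa using this
        have := mul_nonneg h2t.le hB
        linarith
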